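/- Let γ > 0, C₀ ≥ 0, E > 0, let f : [0, ∞) → (0, 1] be locally absolutely continuous with −f′(t) ≤ C₀ f(t)^{γ+1} g(t) for almost every t, where g : [0, ∞) → [0, ∞) is measurable with ∫₀^∞ g(t)² dt ≤ E. Then for every t ≥ 0, f(t) ≥ ( f(0)^{−γ} + γ C₀ (E t)^{1/2} )^{−1/γ}; in particular there exists a constant c > 0, depending only on γ, C₀, E and f(0), such that f(t) ≥ c · t^{−1/(2γ)} for all t ≥ 1. -/

import Mathlib

open MeasureTheory

set_option maxHeartbeats 1000000

private lemma bern18 {γ r : ℝ} (hγ : 0 < γ) (hr : 0 < r) : 1 - γ * (r - 1) ≤ r ^ (-γ) := by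
  rw [Real.rpow_def_of_pos hr]
  have h1 : Real.log r ≤ r - 1 := Real.log_le_sub_one_of_pos hr
  have h2 : 1 + Real.log r * -γ ≤ Real.exp (Real.log r * -γ) := by
    linarith [Real.add_one_le_exp (Real.log r * -γ)]
  nlinarith [mul_le_mul_of_nonneg_left h1 hγ.le]

private lemma convex_key18 {γ x y : ℝ} (hγ : 0 < γ) (hx : 0 < x) (hy : 0 < y) :
    y ^ (-γ) - x ^ (-γ) ≤ γ * y ^ (-γ - 1) * (x - y) := by
  have hxy : (x / y) ^ (-γ) * y ^ (-γ) = x ^ (-γ) := by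
    rw [← Real.mul_rpow (by positivity) hy.le, div_mul_cancel₀ _ hy.ne']
  have hb : 1 - γ * (x / y - 1) ≤ (x / y) ^ (-γ) := bern18 hγ (by positivity)
  have h1 : y ^ (-γ - 1) * (x - y) = y ^ (-γ) * (x / y - 1) := by
    rw [show (-γ - 1 : ℝ) = -γ + (-1) by ring, Real.rpow_add hy, Real.rpow_neg_one]
    field_simp
  have hyp : (0:ℝ) < y ^ (-γ) := Real.rpow_pos_of_pos hy _
  have h2 := mul_le_mul_of_nonneg_right hb hyp.le
  rw [hxy] at h2
  have h3 : γ * (y ^ (-γ - 1) * (x - y)) = γ * (y ^ (-γ) * (x / y - 1)) := by rw [h1]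
  nlinarith [h2, h3]

/-- a priori decay estimate for a positive locally absolutely continuous
function `f` (encoded as the indefinite integral of its locally integrable derivative `f'`)
satisfying `-f' ≤ C₀ f^{γ+1} g` with `∫₀^∞ g² ≤ E`; this controls the rate of degeneration
`1 − |b^±(t)|` of the Möbius transforms along the Teichmüller harmonic map flow. -/
theorem stmt18 (γ C₀ E : ℝ) (hγ : 0 < γ) (hC₀ : 0 ≤ C₀) (hE : 0 < E)
    (f f' g : ℝ → ℝ)
    (hf : ∀ t, 0 ≤ t → f t ∈ Set.Ioc (0:ℝ) 1)
    (hf'int : ∀ a b : ℝ, 0 ≤ a → a ≤ b → IntervalIntegrable f' volume a b)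
    (hFTC : ∀ a b : ℝ, 0 ≤ a → a ≤ b → f b - f a = ∫ t in a..b, f' t)
    (hode : ∀ᵐ t ∂(volume.restrict (Set.Ici (0:ℝ))), -f' t ≤ C₀ * f t ^ (γ + 1) * g t)
    (hg : ∀ t, 0 ≤ g t) (hgm : Measurable g)
    (hgint : IntegrableOn (fun t => (g t) ^ 2) (Set.Ici (0:ℝ)))
    (hgE : (∫ t in Set.Ici (0:ℝ), (g t) ^ 2) ≤ E) :
    (∀ t : ℝ, 0 ≤ t →
      (f 0 ^ (-γ) + γ * C₀ * Real.sqrt (E * t)) ^ (-(1 / γ)) ≤ f t) ∧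
    ∃ c > (0:ℝ), ∀ t : ℝ, 1 ≤ t → c * t ^ (-(1 / (2 * γ))) ≤ f t := by
  obtain ⟨hf0pos, hf0le⟩ := hf 0 le_rfl
  have hApos : (0:ℝ) < f 0 ^ (-γ) := Real.rpow_pos_of_pos hf0pos _
  -- continuity of f on [0, T]
  have hcont : ∀ T : ℝ, 0 ≤ T → ContinuousOn f (Set.Icc 0 T) := by
    intro T hT
    have hint : IntervalIntegrable f' volume 0 T := hf'int 0 T le_rfl hT
    have hF : ContinuousOn (fun x => f 0 + ∫ s in (0:ℝ)..x, f' s) (Set.Icc 0 T) := by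
      have h := intervalIntegral.continuousOn_primitive_interval' hint
        (Set.left_mem_uIcc (a := (0:ℝ)) (b := T))
      rw [Set.uIcc_of_le hT] at h
      exact continuousOn_const.add h
    refine hF.congr ?_
    intro x hx
    have h := hFTC 0 x le_rfl hx.1
    simp only []
    linarith
  -- interval integrability of g
  have hgI : ∀ a b : ℝ, 0 ≤ a → a ≤ b → IntervalIntegrable g volume a b := by
    intro a b ha hab
    rw [intervalIntegrable_iff_integrableOn_Ioc_of_le hab]
    have hb : IntegrableOn (fun s => (g s)^2/2 + 1/2) (Set.Ioc a b) volume := by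
      refine Integrable.add ?_ ?_
      · exact (hgint.mono_set (fun x hx => le_trans ha hx.1.le)).div_const 2
      · exact integrableOn_const measure_Ioc_lt_top.ne
    refine Integrable.mono' hb (hgm.aestronglyMeasurable.restrict) ?_
    refine Filter.Eventually.of_forall (fun s => ?_)
    rw [Real.norm_eq_abs, abs_of_nonneg (hg s)]
    nlinarith [sq_nonneg (g s - 1), hg s]
  -- Key step: f t ^ (-γ) ≤ f 0 ^ (-γ) + γ C₀ ∫₀ᵗ g
  have key : ∀ t : ℝ, 0 ≤ t → f t ^ (-γ) ≤ f 0 ^ (-γ) + γ * C₀ * ∫ s in (0:ℝ)..t, g s := by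
    intro t ht
    obtain ⟨z, hzmem, hzmin⟩ := (isCompact_Icc (a := (0:ℝ)) (b := t)).exists_isMinOn
      ⟨0, Set.left_mem_Icc.2 ht⟩ (hcont t ht)
    set m := f z with hm
    have hmpos : 0 < m := (hf z hzmem.1).1
    have hmle : ∀ s, s ∈ Set.Icc (0:ℝ) t → m ≤ f s := fun s hs => isMinOn_iff.1 hzmin s hs
    have hIg0 : IntervalIntegrable g volume 0 t := hgI 0 t le_rfl ht
    have hIgnn : 0 ≤ ∫ s in (0:ℝ)..t, g s :=
      intervalIntegral.integral_nonneg ht (fun s _ => hg s)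
    have Heps : ∀ ε : ℝ, 0 < ε →
        f t ^ (-γ) - f 0 ^ (-γ) ≤ (1+ε)^(γ+1) * (γ * C₀ * ∫ s in (0:ℝ)..t, g s) := by
      intro ε hε
      have huc : UniformContinuousOn f (Set.Icc 0 t) :=
        isCompact_Icc.uniformContinuousOn_of_continuous (hcont t ht)
      obtain ⟨δ, hδ, hδuc⟩ := Metric.uniformContinuousOn_iff.1 huc (ε * m) (by positivity)
      obtain ⟨n₀, hn₀⟩ := exists_nat_gt (t / δ)
      set n : ℕ := n₀ + 1 with hn
      have hnpos : (0:ℝ) < (n:ℝ) := by positivity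
      have hne : (n:ℝ) ≠ 0 := ne_of_gt hnpos
      have hstep : t / (n:ℝ) < δ := by
        rw [div_lt_iff₀ hnpos]
        have h1 : t / δ < (n:ℝ) := lt_of_lt_of_le hn₀ (by exact_mod_cast Nat.le_succ n₀)
        rw [div_lt_iff₀ hδ] at h1
        linarith
      set x : ℕ → ℝ := fun k => (k:ℝ) * (t / (n:ℝ)) with hxdef
      have hx0 : x 0 = 0 := by simp [hxdef]
      have hxn : x n = t := by
        show (n:ℝ) * (t / (n:ℝ)) = t
        rw [mul_comm, div_mul_cancel₀ _ hne]
      have hxa : ∀ k : ℕ, 0 ≤ x k := fun k => by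
        have : (0:ℝ) ≤ t / n := by positivity
        exact mul_nonneg (Nat.cast_nonneg k) this
      have hxmono : ∀ k : ℕ, x k ≤ x (k+1) := fun k => by
        have h1 : (0:ℝ) ≤ t / n := by positivity
        have h2 : ((k:ℝ)) ≤ ((k:ℝ)+1) := by linarith
        calc (k:ℝ) * (t/n) ≤ ((k:ℝ)+1) * (t/n) := mul_le_mul_of_nonneg_right h2 h1
          _ = ((k+1 : ℕ):ℝ) * (t/n) := by push_cast; ring
      have hxle : ∀ k : ℕ, k ≤ n → x k ≤ t := by
        intro k hk
        have h1 : (0:ℝ) ≤ t / n := by positivity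
        calc x k = (k:ℝ) * (t/n) := rfl
          _ ≤ (n:ℝ) * (t/n) := mul_le_mul_of_nonneg_right (by exact_mod_cast hk) h1
          _ = t := hxn
      have hxdiff : ∀ k : ℕ, x (k+1) - x k = t / n := fun k => by
        show ((k+1:ℕ):ℝ) * (t/n) - (k:ℝ)*(t/n) = t/n
        push_cast; ring
      -- per-piece estimate
      have hpiece : ∀ k, k < n →
          f (x (k+1)) ^ (-γ) - f (x k) ^ (-γ) ≤
            (1+ε)^(γ+1) * (γ * C₀ * ∫ s in x k..x (k+1), g s) := by
        intro k hk
        set a := x k with hadef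
        set b := x (k+1) with hbdef
        have ha : 0 ≤ a := hxa k
        have hab : a ≤ b := hxmono k
        have hbt : b ≤ t := hxle (k+1) hk
        have hamem : a ∈ Set.Icc (0:ℝ) t := ⟨ha, le_trans hab hbt⟩
        have hbmem : b ∈ Set.Icc (0:ℝ) t := ⟨le_trans ha hab, hbt⟩
        have hsub : Set.Icc a b ⊆ Set.Icc (0:ℝ) t :=
          fun s hs => ⟨le_trans ha hs.1, le_trans hs.2 hbt⟩
        obtain ⟨hfapos, hfale⟩ := hf a ha
        obtain ⟨hfbpos, hfble⟩ := hf b (le_trans ha hab)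
        have hIg' : IntervalIntegrable g volume a b := hgI a b ha hab
        have hIgOn : IntegrableOn g (Set.Ioc a b) volume :=
          (intervalIntegrable_iff_integrableOn_Ioc_of_le hab).1 hIg'
        -- integrability of C₀ f^{γ+1} g
        have hfm : AEStronglyMeasurable f (volume.restrict (Set.Ioc a b)) :=
          (((hcont t ht).mono (Set.Ioc_subset_Icc_self.trans hsub))).aestronglyMeasurable
            measurableSet_Ioc
        have hrc : Continuous (fun y : ℝ => y ^ (γ+1)) := by
          rw [continuous_iff_continuousAt]
          exact fun y => Real.continuousAt_rpow_const y (γ+1) (Or.inr (by linarith))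
        have hfgm : AEStronglyMeasurable (fun s => C₀ * f s ^ (γ+1) * g s)
            (volume.restrict (Set.Ioc a b)) :=
          ((aestronglyMeasurable_const.mul (hrc.comp_aestronglyMeasurable hfm)).mul
            (hgm.aestronglyMeasurable.restrict))
        have hfg_int : IntervalIntegrable (fun s => C₀ * f s ^ (γ+1) * g s) volume a b := by
          rw [intervalIntegrable_iff_integrableOn_Ioc_of_le hab]
          refine Integrable.mono' (hIgOn.const_mul C₀) hfgm ?_
          filter_upwards [ae_restrict_mem measurableSet_Ioc] with s hs
          obtain ⟨hfspos, hfsle⟩ := hf s (le_trans ha hs.1.le)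
          rw [Real.norm_eq_abs, abs_of_nonneg
            (mul_nonneg (mul_nonneg hC₀ (Real.rpow_nonneg hfspos.le _)) (hg s))]
          have h1 : f s ^ (γ+1) ≤ 1 := Real.rpow_le_one hfspos.le hfsle (by linarith)
          nlinarith [hg s, mul_nonneg hC₀ (hg s)]
        -- a.e. comparison from the ODE
        have haode : (fun s => -f' s) ≤ᵐ[volume.restrict (Set.Icc a b)]
            (fun s => C₀ * f s ^ (γ+1) * g s) :=
          ae_restrict_of_ae_restrict_of_subset (fun s hs => le_trans ha hs.1) hode
        have hmono1 : (∫ s in a..b, -f' s) ≤ ∫ s in a..b, C₀ * f s ^ (γ+1) * g s :=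
          intervalIntegral.integral_mono_ae_restrict hab (hf'int a b ha hab).neg hfg_int haode
        -- pointwise comparison with constant
        have hmono2 : (∫ s in a..b, C₀ * f s ^ (γ+1) * g s) ≤
            ∫ s in a..b, C₀ * (f b + ε*m)^(γ+1) * g s := by
          refine intervalIntegral.integral_mono_on hab hfg_int (hIg'.const_mul _) ?_
          intro s hs
          have hsmem : s ∈ Set.Icc (0:ℝ) t := hsub hs
          obtain ⟨hfspos, hfsle⟩ := hf s hsmem.1
          have hdist : dist s b < δ := by
            rw [Real.dist_eq, abs_of_nonpos (by linarith [hs.2])]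
            have := hxdiff k
            linarith [hs.1, hstep]
          have hfsb : dist (f s) (f b) < ε * m := hδuc s hsmem b hbmem hdist
          rw [Real.dist_eq] at hfsb
          have hle : f s ≤ f b + ε*m := by
            have := abs_lt.1 hfsb
            linarith [this.2]
          have h1 : f s ^ (γ+1) ≤ (f b + ε*m)^(γ+1) :=
            Real.rpow_le_rpow hfspos.le hle (by linarith)
          exact mul_le_mul_of_nonneg_right (mul_le_mul_of_nonneg_left h1 hC₀) (hg s)
        -- FTC
        have hftc0 := hFTC a b ha hab
        have hneg : (∫ s in a..b, -f' s) = -(∫ s in a..b, f' s) := intervalIntegral.integral_neg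
        have hconst : (∫ s in a..b, C₀ * (f b + ε*m)^(γ+1) * g s) =
            (C₀ * (f b + ε*m)^(γ+1)) * ∫ s in a..b, g s := by
          rw [← intervalIntegral.integral_const_mul]
        have hftc : f a - f b ≤ (C₀ * (f b + ε*m)^(γ+1)) * ∫ s in a..b, g s := by
          rw [← hconst]
          linarith [hmono1, hmono2]
        -- convexity
        have hck := convex_key18 hγ hfapos hfbpos
        have hnn : (0:ℝ) ≤ γ * f b ^ (-γ-1) := by positivity
        have h5 := mul_le_mul_of_nonneg_left hftc hnn
        -- scalar bound
        have hIgk : 0 ≤ ∫ s in a..b, g s :=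
          intervalIntegral.integral_nonneg hab (fun s _ => hg s)
        have h6 : f b ^ (-γ-1) * (f b + ε*m)^(γ+1) ≤ (1+ε)^(γ+1) := by
          have e1 : f b + ε*m ≤ (1+ε) * f b := by
            have := hmle b hbmem
            nlinarith
          have e2 : (f b + ε*m)^(γ+1) ≤ ((1+ε)*f b)^(γ+1) :=
            Real.rpow_le_rpow (by positivity) e1 (by linarith)
          have e3 : ((1+ε)*f b)^(γ+1) = (1+ε)^(γ+1) * f b^(γ+1) :=
            Real.mul_rpow (by positivity) hfbpos.le
          have e4 : f b ^(-γ-1) * f b^(γ+1) = 1 := by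
            rw [← Real.rpow_add hfbpos, show -γ-1+(γ+1) = (0:ℝ) by ring, Real.rpow_zero]
          calc f b ^(-γ-1) * (f b + ε*m)^(γ+1)
              ≤ f b ^(-γ-1) * ((1+ε)^(γ+1) * f b^(γ+1)) :=
                mul_le_mul_of_nonneg_left (e2.trans_eq e3) (Real.rpow_nonneg hfbpos.le _)
            _ = (1+ε)^(γ+1) * (f b ^(-γ-1) * f b^(γ+1)) := by ring
            _ = (1+ε)^(γ+1) := by rw [e4, mul_one]
        have h7 := mul_le_mul_of_nonneg_right h6
          (mul_nonneg (mul_nonneg hγ.le hC₀) hIgk)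
        calc f b ^ (-γ) - f a ^ (-γ)
            ≤ γ * f b ^ (-γ-1) * (f a - f b) := hck
          _ ≤ γ * f b ^ (-γ-1) * ((C₀ * (f b + ε*m)^(γ+1)) * ∫ s in a..b, g s) := h5
          _ = (f b ^(-γ-1) * (f b + ε*m)^(γ+1)) * (γ * C₀ * ∫ s in a..b, g s) := by ring
          _ ≤ (1+ε)^(γ+1) * (γ * C₀ * ∫ s in a..b, g s) := h7
      -- telescoping
      have hadj : ∀ k, k < n → IntervalIntegrable g volume (x k) (x (k+1)) :=
        fun k _ => hgI _ _ (hxa k) (hxmono k)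
      have hsum := intervalIntegral.sum_integral_adjacent_intervals (μ := volume) (f := g) hadj
      rw [hx0, hxn] at hsum
      have htel : f t ^ (-γ) - f 0 ^ (-γ) ≤
          ∑ k ∈ Finset.range n, ((1+ε)^(γ+1) * (γ * C₀ * ∫ s in x k..x (k+1), g s)) := by
        have h1 := Finset.sum_range_sub (fun k => f (x k) ^ (-γ)) n
        rw [hx0, hxn] at h1
        rw [← h1]
        exact Finset.sum_le_sum (fun k hk => hpiece k (Finset.mem_range.1 hk))
      calc f t ^ (-γ) - f 0 ^ (-γ)
          ≤ ∑ k ∈ Finset.range n, ((1+ε)^(γ+1) * (γ * C₀ * ∫ s in x k..x (k+1), g s)) := htel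
        _ = (1+ε)^(γ+1) * (γ * C₀ * ∑ k ∈ Finset.range n, ∫ s in x k..x (k+1), g s) := by
            rw [← Finset.mul_sum, ← Finset.mul_sum]
        _ = (1+ε)^(γ+1) * (γ * C₀ * ∫ s in (0:ℝ)..t, g s) := by rw [hsum]
    -- take ε → 0⁺
    have hlim : Filter.Tendsto
        (fun ε : ℝ => (1+ε)^(γ+1) * (γ * C₀ * ∫ s in (0:ℝ)..t, g s))
        (nhdsWithin 0 (Set.Ioi 0))
        (nhds ((1+(0:ℝ))^(γ+1) * (γ * C₀ * ∫ s in (0:ℝ)..t, g s))) := by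
      refine Filter.Tendsto.mono_left ?_ nhdsWithin_le_nhds
      have hc : Continuous (fun ε : ℝ => (1+ε)^(γ+1) * (γ * C₀ * ∫ s in (0:ℝ)..t, g s)) := by
        refine Continuous.mul ?_ continuous_const
        exact (continuous_const.add continuous_id).rpow_const (fun x => Or.inr (by linarith))
      exact hc.tendsto 0
    have hev : ∀ᶠ ε in nhdsWithin 0 (Set.Ioi 0),
        f t ^ (-γ) - f 0 ^ (-γ) ≤ (1+ε)^(γ+1) * (γ * C₀ * ∫ s in (0:ℝ)..t, g s) :=
      eventually_mem_nhdsWithin.mono (fun ε hε => Heps ε hε)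
    have hle := ge_of_tendsto hlim hev
    rw [show (1:ℝ)+0 = 1 by ring, Real.one_rpow, one_mul] at hle
    linarith
  -- Cauchy-Schwarz type estimate
  have hsq : ∀ t : ℝ, 0 ≤ t → (∫ s in (0:ℝ)..t, g s) ≤ Real.sqrt (E * t) := by
    intro t ht
    rcases ht.eq_or_lt with h0 | hpos
    · rw [← h0]
      simp [Real.sqrt_nonneg]
    · set l : ℝ := Real.sqrt t / Real.sqrt E with hl
      have hlpos : 0 < l := div_pos (Real.sqrt_pos.2 hpos) (Real.sqrt_pos.2 hE)
      have hg2I : IntervalIntegrable (fun s => (g s)^2) volume 0 t := by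
        rw [intervalIntegrable_iff_integrableOn_Ioc_of_le ht]
        exact hgint.mono_set (fun s hs => hs.1.le)
      have hbd : IntervalIntegrable (fun s => (l * (g s)^2 + 1/l)/2) volume 0 t :=
        ((hg2I.const_mul l).add intervalIntegrable_const).div_const 2
      have hmono : (∫ s in (0:ℝ)..t, g s) ≤ ∫ s in (0:ℝ)..t, (l * (g s)^2 + 1/l)/2 := by
        refine intervalIntegral.integral_mono_on ht (hgI 0 t le_rfl ht) hbd ?_
        intro s _
        have hl2 : l * (1/l) = 1 := by field_simp
        nlinarith [sq_nonneg (l * g s - 1), hlpos]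
      have hval : (∫ s in (0:ℝ)..t, (l * (g s)^2 + 1/l)/2) =
          (l * (∫ s in (0:ℝ)..t, (g s)^2) + t * (1/l))/2 := by
        rw [intervalIntegral.integral_div]
        rw [intervalIntegral.integral_add (hg2I.const_mul l) intervalIntegrable_const]
        rw [intervalIntegral.integral_const_mul, intervalIntegral.integral_const]
        simp only [sub_zero, smul_eq_mul]
      have hg2le : (∫ s in (0:ℝ)..t, (g s)^2) ≤ E := by
        rw [intervalIntegral.integral_of_le ht]
        refine le_trans (setIntegral_mono_set hgint ?_ ?_) hgE
        · exact Filter.Eventually.of_forall (fun s => sq_nonneg _)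
        · exact HasSubset.Subset.eventuallyLE (fun s hs => hs.1.le)
      have hmid : (l * (∫ s in (0:ℝ)..t, (g s)^2) + t * (1/l))/2 ≤ (l * E + t * (1/l))/2 := by
        have := mul_le_mul_of_nonneg_left hg2le hlpos.le
        linarith
      have hfin : (l * E + t * (1/l))/2 = Real.sqrt (E * t) := by
        have hst := Real.mul_self_sqrt hpos.le
        have hsE := Real.mul_self_sqrt hE.le
        have h1 : Real.sqrt t ≠ 0 := ne_of_gt (Real.sqrt_pos.2 hpos)
        have h2 : Real.sqrt E ≠ 0 := ne_of_gt (Real.sqrt_pos.2 hE)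
        rw [hl, Real.sqrt_mul hE.le]
        field_simp
        nlinarith [hst, hsE]
      calc (∫ s in (0:ℝ)..t, g s) ≤ ∫ s in (0:ℝ)..t, (l * (g s)^2 + 1/l)/2 := hmono
        _ = (l * (∫ s in (0:ℝ)..t, (g s)^2) + t * (1/l))/2 := hval
        _ ≤ (l * E + t * (1/l))/2 := hmid
        _ = Real.sqrt (E * t) := hfin
  -- main conclusion, part 1
  have main : ∀ t : ℝ, 0 ≤ t →
      (f 0 ^ (-γ) + γ * C₀ * Real.sqrt (E * t)) ^ (-(1 / γ)) ≤ f t := by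
    intro t ht
    obtain ⟨hftpos, hftle⟩ := hf t ht
    have hnn : (0:ℝ) ≤ γ * C₀ := mul_nonneg hγ.le hC₀
    have h1 : f t ^ (-γ) ≤ f 0 ^ (-γ) + γ * C₀ * Real.sqrt (E * t) := by
      have h2 := mul_le_mul_of_nonneg_left (hsq t ht) hnn
      linarith [key t ht]
    have h2 : (f 0 ^ (-γ) + γ * C₀ * Real.sqrt (E * t)) ^ (-(1/γ)) ≤
        (f t ^ (-γ)) ^ (-(1/γ)) :=
      Real.rpow_le_rpow_of_nonpos (Real.rpow_pos_of_pos hftpos _) h1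
        (neg_nonpos.2 (by positivity))
    have h3 : (f t ^ (-γ)) ^ (-(1/γ)) = f t := by
      rw [← Real.rpow_mul hftpos.le, show -γ * -(1/γ) = (1:ℝ) by
        rw [neg_mul_neg, mul_one_div, div_self hγ.ne'], Real.rpow_one]
    rw [h3] at h2
    exact h2
  refine ⟨main, ?_⟩
  have hnn : (0:ℝ) ≤ γ * C₀ := mul_nonneg hγ.le hC₀
  have hDpos : (0:ℝ) < f 0 ^ (-γ) + γ * C₀ * Real.sqrt E :=
    lt_of_lt_of_le hApos (le_add_of_nonneg_right (mul_nonneg hnn (Real.sqrt_nonneg E)))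
  refine ⟨(f 0 ^ (-γ) + γ * C₀ * Real.sqrt E) ^ (-(1/γ)), Real.rpow_pos_of_pos hDpos _, ?_⟩
  intro t ht
  have ht0 : (0:ℝ) ≤ t := le_trans zero_le_one ht
  have h1 := main t ht0
  have hBpos : (0:ℝ) < f 0 ^ (-γ) + γ * C₀ * Real.sqrt (E * t) :=
    lt_of_lt_of_le hApos (le_add_of_nonneg_right (mul_nonneg hnn (Real.sqrt_nonneg _)))
  have hst1 : (1:ℝ) ≤ Real.sqrt t := by
    have h := Real.sqrt_le_sqrt ht
    rwa [Real.sqrt_one] at h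
  have hB_le : f 0 ^ (-γ) + γ * C₀ * Real.sqrt (E * t) ≤
      (f 0 ^ (-γ) + γ * C₀ * Real.sqrt E) * Real.sqrt t := by
    rw [Real.sqrt_mul hE.le]
    have h2 : f 0 ^ (-γ) ≤ f 0 ^ (-γ) * Real.sqrt t :=
      le_mul_of_one_le_right hApos.le hst1
    nlinarith
  have h2 : ((f 0 ^ (-γ) + γ * C₀ * Real.sqrt E) * Real.sqrt t) ^ (-(1/γ)) ≤
      (f 0 ^ (-γ) + γ * C₀ * Real.sqrt (E * t)) ^ (-(1/γ)) :=
    Real.rpow_le_rpow_of_nonpos hBpos hB_le (neg_nonpos.2 (by positivity))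
  have h3 : ((f 0 ^ (-γ) + γ * C₀ * Real.sqrt E) * Real.sqrt t) ^ (-(1/γ)) =
      (f 0 ^ (-γ) + γ * C₀ * Real.sqrt E) ^ (-(1/γ)) * t ^ (-(1/(2*γ))) := by
    rw [Real.mul_rpow hDpos.le (Real.sqrt_nonneg t)]
    congr 1
    rw [Real.sqrt_eq_rpow, ← Real.rpow_mul ht0]
    congr 1
    ring
  rw [← h3]
  exact le_trans h2 h1
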